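/- (Sufficiency: Theorem 3.1(1), 'if' direction.) Let p, q be real numbers with −1 < p < 1, −1 < q < 1, p + q > 0 and pq ≠ 0, and let a, b be positive real numbers. Suppose the normalized total NUT-charge n = (p+q)·(p+q − a·q·(1−p) − b·p·(1−q)) / (a·b·p·q·(1−p)·(1−q)) is an integer. Then there exist positive real numbers α_0, α_1, α_2, α_3 and integers ℓ_1, ℓ_2 with ℓ_1·ℓ_2 = n + 1 satisfying the four regularity relations: ℓ_1·p·α_1 + q·α_2 = α_0; p·α_1 + ℓ_2·q·α_2 = α_3; −ℓ_1·a·p·(1−p)·α_1 + (p + q − a·q·(1−p))·α_2 = 0; and (p + q − b·p·(1−q))·α_1 − ℓ_2·b·q·(1−q)·α_2 = 0. -/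

import Mathlib

theorem helper16 (p q a b : ℝ)
    (hp1 : p < 1) (hq1 : q < 1) (hpq : 0 < p + q)
    (ha : 0 < a) (hb : 0 < b)
    (ℓ₁ ℓ₂ : ℤ) (r : ℝ) (hr : 0 < r)
    (h3 : (ℓ₁ : ℝ) * (a * p * (1 - p)) = (p + q - a * q * (1 - p)) * r)
    (h4 : (p + q - b * p * (1 - q)) = (ℓ₂ : ℝ) * (b * q * (1 - q)) * r)
    (hN : (ℓ₁ : ℝ) * (ℓ₂ : ℝ) =
      (p + q) * (p + q - a * q * (1 - p) - b * p * (1 - q)) /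
        (a * b * p * q * (1 - p) * (1 - q)) + 1) :
    ∃ (α₀ α₁ α₂ α₃ : ℝ) (ℓ₁ ℓ₂ : ℤ),
      0 < α₀ ∧ 0 < α₁ ∧ 0 < α₂ ∧ 0 < α₃ ∧
      (ℓ₁ : ℝ) * (ℓ₂ : ℝ) =
        (p + q) * (p + q - a * q * (1 - p) - b * p * (1 - q)) /
          (a * b * p * q * (1 - p) * (1 - q)) + 1 ∧
      (ℓ₁ : ℝ) * p * α₁ + q * α₂ = α₀ ∧
      p * α₁ + (ℓ₂ : ℝ) * q * α₂ = α₃ ∧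
      -(ℓ₁ : ℝ) * a * p * (1 - p) * α₁ + (p + q - a * q * (1 - p)) * α₂ = 0 ∧
      (p + q - b * p * (1 - q)) * α₁ - (ℓ₂ : ℝ) * b * q * (1 - q) * α₂ = 0 := by
  have h1p : (0:ℝ) < 1 - p := by linarith
  have h1q : (0:ℝ) < 1 - q := by linarith
  refine ⟨(p+q)*r/(a*(1-p)), 1, r, (p+q)/(b*(1-q)), ℓ₁, ℓ₂, by positivity, one_pos, hr,
    by positivity, hN, ?_, ?_, ?_, ?_⟩
  · rw [eq_div_iff (by positivity : a * (1 - p) ≠ 0)]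
    linear_combination h3
  · rw [eq_div_iff (by positivity : b * (1 - q) ≠ 0)]
    linear_combination -h4
  · linear_combination -h3
  · linear_combination h4

theorem statement16 (p q a b : ℝ)
    (hp : -1 < p) (hp1 : p < 1) (hq : -1 < q) (hq1 : q < 1)
    (hpq : 0 < p + q) (hpq0 : p * q ≠ 0)
    (ha : 0 < a) (hb : 0 < b)
    (hn : ∃ m : ℤ, (p + q) * (p + q - a * q * (1 - p) - b * p * (1 - q)) /
      (a * b * p * q * (1 - p) * (1 - q)) = (m : ℝ)) :
    ∃ (α₀ α₁ α₂ α₃ : ℝ) (ℓ₁ ℓ₂ : ℤ),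
      0 < α₀ ∧ 0 < α₁ ∧ 0 < α₂ ∧ 0 < α₃ ∧
      (ℓ₁ : ℝ) * (ℓ₂ : ℝ) =
        (p + q) * (p + q - a * q * (1 - p) - b * p * (1 - q)) /
          (a * b * p * q * (1 - p) * (1 - q)) + 1 ∧
      (ℓ₁ : ℝ) * p * α₁ + q * α₂ = α₀ ∧
      p * α₁ + (ℓ₂ : ℝ) * q * α₂ = α₃ ∧
      -(ℓ₁ : ℝ) * a * p * (1 - p) * α₁ + (p + q - a * q * (1 - p)) * α₂ = 0 ∧
      (p + q - b * p * (1 - q)) * α₁ - (ℓ₂ : ℝ) * b * q * (1 - q) * α₂ = 0 := by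
  obtain ⟨m, hm⟩ := hn
  have hpne : p ≠ 0 := fun h => hpq0 (by simp [h])
  have hqne : q ≠ 0 := fun h => hpq0 (by simp [h])
  have h1p : (0:ℝ) < 1 - p := by linarith
  have h1q : (0:ℝ) < 1 - q := by linarith
  have hD : a * b * p * q * (1 - p) * (1 - q) ≠ 0 :=
    mul_ne_zero (mul_ne_zero (mul_ne_zero (mul_ne_zero (mul_ne_zero ha.ne' hb.ne') hpne)
      hqne) h1p.ne') h1q.ne'
  have hm' := (div_eq_iff hD).mp hm
  have key : (p + q - a*q*(1-p)) * (p + q - b*p*(1-q)) =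
      ((m:ℝ) + 1) * (a * b * p * q * (1 - p) * (1 - q)) := by
    linear_combination hm'
  have hu : a * p * (1 - p) ≠ 0 := mul_ne_zero (mul_ne_zero ha.ne' hpne) h1p.ne'
  have hv : b * q * (1 - q) ≠ 0 := mul_ne_zero (mul_ne_zero hb.ne' hqne) h1q.ne'
  by_cases hS1 : p + q - a*q*(1-p) = 0
  · have hm1 : (m:ℝ) + 1 = 0 := by
      rw [hS1, zero_mul] at key
      exact (mul_eq_zero.mp key.symm).resolve_right hD
    by_cases hS2 : p + q - b*p*(1-q) = 0
    · refine helper16 p q a b hp1 hq1 hpq ha hb 0 0 1 one_pos ?_ ?_ ?_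
      · rw [hS1]; simp
      · rw [hS2]; simp
      · rw [hm]; push_cast; linarith
    · rcases (mul_ne_zero hS2 hv).lt_or_gt with hlt | hgt
      · refine helper16 p q a b hp1 hq1 hpq ha hb 0 (-1)
          (-((p + q - b*p*(1-q)) / (b * q * (1 - q)))) ?_ ?_ ?_ ?_
        · rw [neg_pos]
          rcases mul_neg_iff.mp hlt with ⟨h1,h2⟩|⟨h1,h2⟩
          · exact div_neg_of_pos_of_neg h1 h2
          · exact div_neg_of_neg_of_pos h1 h2
        · rw [hS1]; simp
        · push_cast; field_simp; try ring
        · rw [hm]; push_cast; linarith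
      · refine helper16 p q a b hp1 hq1 hpq ha hb 0 1
          ((p + q - b*p*(1-q)) / (b * q * (1 - q))) ?_ ?_ ?_ ?_
        · rcases mul_pos_iff.mp hgt with ⟨h1,h2⟩|⟨h1,h2⟩
          · exact div_pos h1 h2
          · exact div_pos_of_neg_of_neg h1 h2
        · rw [hS1]; simp
        · push_cast; field_simp; try ring
        · rw [hm]; push_cast; linarith
  · by_cases hS2 : p + q - b*p*(1-q) = 0
    · have hm1 : (m:ℝ) + 1 = 0 := by
        rw [hS2, mul_zero] at key
        exact (mul_eq_zero.mp key.symm).resolve_right hD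
      rcases (mul_ne_zero hu hS1).lt_or_gt with hlt | hgt
      · refine helper16 p q a b hp1 hq1 hpq ha hb (-1) 0
          (-(a * p * (1 - p) / (p + q - a*q*(1-p)))) ?_ ?_ ?_ ?_
        · rw [neg_pos]
          rcases mul_neg_iff.mp hlt with ⟨h1,h2⟩|⟨h1,h2⟩
          · exact div_neg_of_pos_of_neg h1 h2
          · exact div_neg_of_neg_of_pos h1 h2
        · push_cast; generalize p + q - a*q*(1-p) = S at hS1 ⊢; field_simp; try ring
        · rw [hS2]; simp
        · rw [hm]; push_cast; linarith
      · refine helper16 p q a b hp1 hq1 hpq ha hb 1 0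
          (a * p * (1 - p) / (p + q - a*q*(1-p))) ?_ ?_ ?_ ?_
        · rcases mul_pos_iff.mp hgt with ⟨h1,h2⟩|⟨h1,h2⟩
          · exact div_pos h1 h2
          · exact div_pos_of_neg_of_neg h1 h2
        · push_cast; generalize p + q - a*q*(1-p) = S at hS1 ⊢; field_simp; try ring
        · rw [hS2]; simp
        · rw [hm]; push_cast; linarith
    · -- main case: both nonzero
      have hkc : (((m+1 : ℤ)):ℝ) = (m:ℝ) + 1 := by push_cast; ring
      have hkne : (((m+1 : ℤ)):ℝ) ≠ 0 := by
        intro h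
        apply mul_ne_zero hS1 hS2
        rw [key, ← hkc, h, zero_mul]
      rcases (mul_ne_zero (mul_ne_zero hkne hu) hS1).lt_or_gt with hlt | hgt
      · refine helper16 p q a b hp1 hq1 hpq ha hb (-(m+1)) (-1)
          (-((((m+1:ℤ)):ℝ) * (a * p * (1 - p)) / (p + q - a*q*(1-p)))) ?_ ?_ ?_ ?_
        · rw [neg_pos]
          rcases mul_neg_iff.mp hlt with ⟨h1,h2⟩|⟨h1,h2⟩
          · exact div_neg_of_pos_of_neg h1 h2
          · exact div_neg_of_neg_of_pos h1 h2
        · push_cast; generalize p + q - a*q*(1-p) = S at hS1 ⊢; field_simp; try ring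
        · push_cast; generalize p + q - a*q*(1-p) = S at hS1 key ⊢; field_simp; try ring
          linear_combination key
        · rw [hm]; push_cast; ring
      · refine helper16 p q a b hp1 hq1 hpq ha hb (m+1) 1
          ((((m+1:ℤ)):ℝ) * (a * p * (1 - p)) / (p + q - a*q*(1-p))) ?_ ?_ ?_ ?_
        · rcases mul_pos_iff.mp hgt with ⟨h1,h2⟩|⟨h1,h2⟩
          · exact div_pos h1 h2
          · exact div_pos_of_neg_of_neg h1 h2
        · push_cast; generalize p + q - a*q*(1-p) = S at hS1 key ⊢; field_simp; try ring
        · push_cast; generalize p + q - a*q*(1-p) = S at hS1 key ⊢; field_simp; try ring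
          linear_combination key
        · rw [hm]; push_cast; ring
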